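/- Extending scope of universal quantifier over disjunction (rule 3): ∀x((φ ∧ y ⊥ x) ∨ ψ) is logically equivalent to (∀x φ) ∨ ψ, provided x does not occur free in ψ and y is a tuple listing all the variables in Fr(φ ∨ ψ) \ {x}. -/

import Mathlib

open FirstOrder Language

/-- Formulas of independence logic over a first-order language `L`, with variables `ℕ`:
first-order formulas, conditional independence atoms `t1 ⊥_{t3} t2` (written
`indep t1 t2 t3`) between tuples (lists) of terms, conjunction, disjunction, and
existential and universal quantification. -/
inductive TeamFormula (L : Language) : Type _ where
  | fo (φ : L.Formula ℕ)
  | indep (t1 t2 t3 : List (L.Term ℕ))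
  | and (φ ψ : TeamFormula L)
  | or (φ ψ : TeamFormula L)
  | ex (x : ℕ) (φ : TeamFormula L)
  | all (x : ℕ) (φ : TeamFormula L)

namespace TeamFormula

variable {L : Language}

/-- The set of free variables of an independence-logic formula. -/
def Fr : TeamFormula L → Set ℕ
  | .fo φ => ↑φ.freeVarFinset
  | .indep t1 t2 t3 => ↑((t1 ++ t2 ++ t3).foldr (fun t s => t.varFinset ∪ s) ∅)
  | .and φ ψ => φ.Fr ∪ ψ.Fr
  | .or φ ψ => φ.Fr ∪ ψ.Fr
  | .ex x φ => φ.Fr \ {x}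
  | .all x φ => φ.Fr \ {x}

/-- A team is a set of assignments. -/
abbrev Team (M : Type*) := Set (ℕ → M)

/-- The value of a tuple (list) of terms under an assignment. -/
def listVal {M : Type*} [L.Structure M] (ts : List (L.Term ℕ)) (s : ℕ → M) : List M :=
  ts.map fun t => t.realize s

/-- Lax team semantics for independence logic.  First-order formulas are evaluated
pointwise; disjunction splits the team into a union; `∃x φ` is witnessed by a function
`F` from the team to nonempty sets of elements, extending the team to
`X(F/x) = {s(a/x) : s ∈ X, a ∈ F s}`; `∀x φ` duplicates the team to `X(M/x)`. -/
def Sat (M : Type*) [L.Structure M] : TeamFormula L → Team M → Prop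
  | .fo φ, X => ∀ s ∈ X, φ.Realize s
  | .indep t1 t2 t3, X => ∀ s ∈ X, ∀ s' ∈ X, listVal t3 s = listVal t3 s' →
      ∃ s'' ∈ X, listVal t1 s'' = listVal t1 s ∧ listVal t3 s'' = listVal t3 s ∧
        listVal t2 s'' = listVal t2 s'
  | .and φ ψ, X => φ.Sat M X ∧ ψ.Sat M X
  | .or φ ψ, X => ∃ Y Z : Team M, Y ∪ Z = X ∧ φ.Sat M Y ∧ ψ.Sat M Z
  | .ex x φ, X => ∃ F : (ℕ → M) → Set M, (∀ s ∈ X, (F s).Nonempty) ∧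
      φ.Sat M {s' | ∃ s ∈ X, ∃ a ∈ F s, s' = Function.update s x a}
  | .all x φ, X => φ.Sat M {s' | ∃ s ∈ X, ∃ a : M, s' = Function.update s x a}

end TeamFormula

open FirstOrder Language

namespace TeamFormulaAux

variable {L : Language} {M : Type*} [L.Structure M]

lemma term_realize_eqOn (t : L.Term ℕ) {s s' : ℕ → M}
    (h : Set.EqOn s s' ↑t.varFinset) : t.realize s = t.realize s' := by
  rw [← Term.realize_restrictVar' (Set.Subset.refl (↑t.varFinset : Set ℕ)) (v := s),
      ← Term.realize_restrictVar' (Set.Subset.refl (↑t.varFinset : Set ℕ)) (v := s')]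
  congr 1
  funext i
  exact h i.2

lemma fo_realize_eqOn (φ : L.Formula ℕ) {s s' : ℕ → M}
    (h : Set.EqOn s s' ↑φ.freeVarFinset) : φ.Realize s ↔ φ.Realize s' := by
  rw [Formula.Realize, Formula.Realize,
    ← BoundedFormula.realize_restrictFreeVar' (Set.Subset.refl (↑φ.freeVarFinset : Set ℕ)) (v := s),
    ← BoundedFormula.realize_restrictFreeVar' (Set.Subset.refl (↑φ.freeVarFinset : Set ℕ)) (v := s')]
  have h' : s ∘ (Subtype.val : (↑φ.freeVarFinset : Set ℕ) → ℕ) = s' ∘ Subtype.val :=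
    funext fun i => h i.2
  rw [h']

lemma map_eq_map_mem {α β : Type*} {f g : α → β} :
    ∀ {l : List α}, l.map f = l.map g → ∀ a ∈ l, f a = g a := by
  intro l
  induction l with
  | nil => intro _ a ha; exact absurd ha (List.not_mem_nil (a := a))
  | cons b l ih =>
    intro h a ha
    simp only [List.map_cons, List.cons.injEq] at h
    rw [List.mem_cons] at ha
    rcases ha with rfl | ha
    · exact h.1
    · exact ih h.2 a ha

lemma varFinset_subset_foldr {t : L.Term ℕ} :
    ∀ {ts : List (L.Term ℕ)}, t ∈ ts →
      (↑t.varFinset : Set ℕ) ⊆ ↑(ts.foldr (fun t s => t.varFinset ∪ s) ∅) := by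
  intro ts
  induction ts with
  | nil => intro h; exact absurd h (List.not_mem_nil (a := t))
  | cons u ts ih =>
    intro h
    rw [List.mem_cons] at h
    rcases h with rfl | h
    · simp only [List.foldr_cons, Finset.coe_union]
      exact Set.subset_union_left
    · simp only [List.foldr_cons, Finset.coe_union]
      exact (ih h).trans Set.subset_union_right

end TeamFormulaAux


namespace TeamFormula

variable {L : Language} {M : Type*} [L.Structure M]

open TeamFormulaAux

/-- `X'` covers `X` up to agreement on `V`. -/
def TRel (V : Set ℕ) (X X' : Team M) : Prop :=
  ∀ s ∈ X, ∃ s' ∈ X', Set.EqOn s s' V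

lemma listVal_eqOn {V : Set ℕ} (ts : List (L.Term ℕ))
    (hts : ∀ t ∈ ts, (↑t.varFinset : Set ℕ) ⊆ V)
    {s s' : ℕ → M} (h : Set.EqOn s s' V) : listVal ts s = listVal ts s' :=
  List.map_congr_left fun t ht => term_realize_eqOn t (h.mono (hts t ht))

lemma eqOn_update {V : Set ℕ} {x : ℕ} {s s' : ℕ → M} (a : M) (h : Set.EqOn s s' V) :
    Set.EqOn (Function.update s x a) (Function.update s' x a) (V ∪ {x}) := by
  intro v hv
  rcases eq_or_ne v x with rfl | hne
  · simp
  · rcases hv with hv | hv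
    · simp [Function.update_of_ne hne, h hv]
    · exact absurd hv hne

/-- Locality of the lax team semantics. -/
lemma sat_of_trel (φ : TeamFormula L) : ∀ V : Set ℕ, φ.Fr ⊆ V → ∀ X X' : Team M,
    TRel V X X' → TRel V X' X → φ.Sat M X → φ.Sat M X' := by
  induction φ with
  | fo φ =>
    intro V hV X X' _ h2 hX s' hs'
    obtain ⟨s, hs, he⟩ := h2 s' hs'
    exact (fo_realize_eqOn φ (he.mono hV)).mpr (hX s hs)
  | indep t1 t2 t3 =>
    intro V hV X X' h1 h2 hX s' hs' s2' hs2' h3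
    obtain ⟨s, hs, he⟩ := h2 s' hs'
    obtain ⟨s2, hs2, he2⟩ := h2 s2' hs2'
    have sub1 : ∀ t ∈ t1, (↑t.varFinset : Set ℕ) ⊆ V := fun t ht =>
      (varFinset_subset_foldr (by simp [ht])).trans hV
    have sub2 : ∀ t ∈ t2, (↑t.varFinset : Set ℕ) ⊆ V := fun t ht =>
      (varFinset_subset_foldr (by simp [ht])).trans hV
    have sub3 : ∀ t ∈ t3, (↑t.varFinset : Set ℕ) ⊆ V := fun t ht =>
      (varFinset_subset_foldr (by simp [ht])).trans hV
    have e1 : listVal t1 s' = listVal t1 s := listVal_eqOn t1 sub1 he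
    have e2 : listVal t2 s2' = listVal t2 s2 := listVal_eqOn t2 sub2 he2
    have e3 : listVal t3 s' = listVal t3 s := listVal_eqOn t3 sub3 he
    have e3' : listVal t3 s2' = listVal t3 s2 := listVal_eqOn t3 sub3 he2
    obtain ⟨u, hu, hu1, hu3, hu2⟩ := hX s hs s2 hs2 (e3.symm.trans (h3.trans e3'))
    obtain ⟨u', hu', heu⟩ := h1 u hu
    exact ⟨u', hu',
      (listVal_eqOn t1 sub1 heu).symm.trans (hu1.trans e1.symm),
      (listVal_eqOn t3 sub3 heu).symm.trans (hu3.trans e3.symm),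
      (listVal_eqOn t2 sub2 heu).symm.trans (hu2.trans e2.symm)⟩
  | and φ ψ ihφ ihψ =>
    intro V hV X X' h1 h2 hX
    exact ⟨ihφ V ((Set.subset_union_left).trans hV) X X' h1 h2 hX.1,
      ihψ V ((Set.subset_union_right).trans hV) X X' h1 h2 hX.2⟩
  | or φ ψ ihφ ihψ =>
    intro V hV X X' h1 h2 hX
    obtain ⟨Y, Z, hYZ, hY, hZ⟩ := hX
    refine ⟨{s' ∈ X' | ∃ s ∈ Y, Set.EqOn s s' V}, {s' ∈ X' | ∃ s ∈ Z, Set.EqOn s s' V},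
      ?_, ?_, ?_⟩
    · ext u
      constructor
      · rintro (hu | hu) <;> exact hu.1
      · intro hu
        obtain ⟨s, hs, he⟩ := h2 u hu
        rw [← hYZ] at hs
        rcases hs with hs | hs
        · exact Or.inl ⟨hu, s, hs, he.symm⟩
        · exact Or.inr ⟨hu, s, hs, he.symm⟩
    · refine ihφ V ((Set.subset_union_left).trans hV) Y _ ?_ ?_ hY
      · intro s hs
        obtain ⟨s', hs', he⟩ := h1 s (by rw [← hYZ]; exact Or.inl hs)
        exact ⟨s', ⟨hs', s, hs, he⟩, he⟩
      · rintro s' ⟨_, s, hs, he⟩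
        exact ⟨s, hs, he.symm⟩
    · refine ihψ V ((Set.subset_union_right).trans hV) Z _ ?_ ?_ hZ
      · intro s hs
        obtain ⟨s', hs', he⟩ := h1 s (by rw [← hYZ]; exact Or.inr hs)
        exact ⟨s', ⟨hs', s, hs, he⟩, he⟩
      · rintro s' ⟨_, s, hs, he⟩
        exact ⟨s, hs, he.symm⟩
  | ex x φ ih =>
    intro V hV X X' h1 h2 hX
    obtain ⟨F, hF, hsat⟩ := hX
    refine ⟨fun s' => ⋃ s ∈ {s ∈ X | Set.EqOn s s' V}, F s, ?_, ?_⟩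
    · intro s' hs'
      obtain ⟨s, hs, he⟩ := h2 s' hs'
      obtain ⟨a, ha⟩ := hF s hs
      exact ⟨a, Set.mem_biUnion ⟨hs, he.symm⟩ ha⟩
    · have hV' : φ.Fr ⊆ V ∪ {x} := by
        intro v hv
        rcases eq_or_ne v x with rfl | hne
        · exact Or.inr rfl
        · exact Or.inl (hV ⟨hv, hne⟩)
      refine ih (V ∪ {x}) hV' _ _ ?_ ?_ hsat
      · rintro u ⟨s, hs, a, ha, rfl⟩
        obtain ⟨s', hs', he⟩ := h1 s hs
        exact ⟨Function.update s' x a,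
          ⟨s', hs', a, Set.mem_biUnion ⟨hs, he⟩ ha, rfl⟩, eqOn_update a he⟩
      · rintro u' ⟨s', hs', a, ha, rfl⟩
        obtain ⟨s, ⟨hs, he⟩, ha'⟩ := Set.mem_iUnion₂.mp ha
        exact ⟨Function.update s x a, ⟨s, hs, a, ha', rfl⟩, (eqOn_update a he).symm⟩
  | all x φ ih =>
    intro V hV X X' h1 h2 hX
    have hV' : φ.Fr ⊆ V ∪ {x} := by
      intro v hv
      rcases eq_or_ne v x with rfl | hne
      · exact Or.inr rfl
      · exact Or.inl (hV ⟨hv, hne⟩)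
    refine ih (V ∪ {x}) hV' _ _ ?_ ?_ hX
    · rintro u ⟨s, hs, a, rfl⟩
      obtain ⟨s', hs', he⟩ := h1 s hs
      exact ⟨Function.update s' x a, ⟨s', hs', a, rfl⟩, eqOn_update a he⟩
    · rintro u' ⟨s', hs', a, rfl⟩
      obtain ⟨s, hs, he⟩ := h2 s' hs'
      exact ⟨Function.update s x a, ⟨s, hs, a, rfl⟩, (eqOn_update a he.symm).symm⟩

/-- The empty team satisfies every formula. -/
lemma sat_empty (φ : TeamFormula L) : φ.Sat M (∅ : Team M) := by
  induction φ with
  | fo φ => intro s hs; exact absurd hs (Set.notMem_empty s)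
  | indep t1 t2 t3 => intro s hs; exact absurd hs (Set.notMem_empty s)
  | and φ ψ ihφ ihψ => exact ⟨ihφ, ihψ⟩
  | or φ ψ ihφ ihψ => exact ⟨∅, ∅, by simp, ihφ, ihψ⟩
  | ex x φ ih =>
    refine ⟨fun _ => ∅, fun s hs => absurd hs (Set.notMem_empty s), ?_⟩
    have h : Sat M φ (∅ : Team M) := ih
    convert h using 2
    ext u; simp
  | all x φ ih =>
    show φ.Sat M {s' | ∃ s ∈ (∅ : Team M), ∃ a : M, s' = Function.update s x a}
    have h : Sat M φ (∅ : Team M) := ih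
    convert h using 2
    ext u; simp

lemma listVal_map_var (s : ℕ → M) (y : List ℕ) :
    listVal (y.map (Term.var : ℕ → L.Term ℕ)) s = y.map s := by
  show (y.map Term.var).map (fun t => Term.realize s t) = y.map s
  rw [List.map_map]
  rfl

end TeamFormula


open FirstOrder Language

/-- extending the scope of a universal quantifier over a disjunction
(rule 3): `∀x((φ ∧ y ⊥ x) ∨ ψ)` is logically equivalent to `(∀x φ) ∨ ψ`, provided `x`
does not occur free in `ψ` and `y` is a tuple listing all the variables in
`Fr(φ ∨ ψ) \ {x}`. -/
theorem TeamFormula.extend_scope_forall_or {L : Language} {M : Type*} [L.Structure M]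
    (φ ψ : TeamFormula L) (x : ℕ) (y : List ℕ)
    (hx : x ∉ ψ.Fr)
    (hy : (↑y.toFinset : Set ℕ) = (φ.or ψ).Fr \ {x}) :
    ∀ X : TeamFormula.Team M,
      (TeamFormula.all x ((φ.and
          (TeamFormula.indep (y.map Term.var) [Term.var x] [])).or ψ)).Sat M X ↔
      ((TeamFormula.all x φ).or ψ).Sat M X := by
  intro X
  have hxy : ∀ v ∈ y, v ≠ x := by
    intro v hv
    have hv' : (v : ℕ) ∈ (↑y.toFinset : Set ℕ) := by simpa using hv
    rw [hy] at hv'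
    exact hv'.2
  have hψV : ψ.Fr ⊆ ({x}ᶜ : Set ℕ) := by
    intro v hv hvx
    exact hx (Set.mem_singleton_iff.mp hvx ▸ hv)
  have hφV : φ.Fr ⊆ (↑y.toFinset : Set ℕ) ∪ {x} := by
    intro v hv
    rcases eq_or_ne v x with rfl | hne
    · exact Or.inr rfl
    · left
      rw [hy]
      exact ⟨Or.inl hv, hne⟩
  have hvalx : ∀ s : ℕ → M, listVal [(Term.var x : L.Term ℕ)] s = [s x] := fun s => rfl
  constructor
  · intro h
    simp only [Sat] at h ⊢
    obtain ⟨Y, Z, hYZ, ⟨hYφ, hYi⟩, hZ⟩ := h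
    by_cases hA : ∀ s ∈ X, ∃ a : M, Function.update s x a ∈ Z
    · refine ⟨∅, X, by simp, ?_, ?_⟩
      · have h0 : Sat M φ (∅ : Team M) := sat_empty φ
        convert h0 using 2
        ext u; simp
      · refine sat_of_trel ψ {x}ᶜ hψV Z X ?_ ?_ hZ
        · intro t ht
          have ht' : t ∈ Y ∪ Z := Or.inr ht
          rw [hYZ] at ht'
          obtain ⟨s, hs, a, rfl⟩ := ht'
          exact ⟨s, hs, fun v hv => Function.update_of_ne hv a s⟩
        · intro s hs
          obtain ⟨a, ha⟩ := hA s hs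
          exact ⟨Function.update s x a, ha,
            fun v hv => (Function.update_of_ne hv a s).symm⟩
    · push_neg at hA
      obtain ⟨s₀, hs₀, hs₀Z⟩ := hA
      have hs₀Y : ∀ a : M, Function.update s₀ x a ∈ Y := by
        intro a
        have h' : Function.update s₀ x a ∈ Y ∪ Z := by
          rw [hYZ]; exact ⟨s₀, hs₀, a, rfl⟩
        rcases h' with h' | h'
        · exact h'
        · exact absurd h' (hs₀Z a)
      refine ⟨{s ∈ X | ∃ a : M, Function.update s x a ∈ Y},
              {s ∈ X | ∃ a : M, Function.update s x a ∈ Z}, ?_, ?_, ?_⟩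
      · ext s
        constructor
        · rintro (hs | hs) <;> exact hs.1
        · intro hs
          have h' : Function.update s x (s x) ∈ Y ∪ Z := by
            rw [hYZ]; exact ⟨s, hs, s x, rfl⟩
          rcases h' with h' | h'
          · exact Or.inl ⟨hs, s x, h'⟩
          · exact Or.inr ⟨hs, s x, h'⟩
      · refine sat_of_trel φ ((↑y.toFinset : Set ℕ) ∪ {x}) hφV Y _ ?_ ?_ hYφ
        · intro t ht
          have ht' : t ∈ Y ∪ Z := Or.inl ht
          rw [hYZ] at ht'
          obtain ⟨s, hs, a, rfl⟩ := ht'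
          exact ⟨Function.update s x a, ⟨s, ⟨hs, a, ht⟩, a, rfl⟩, fun v _ => rfl⟩
        · rintro u ⟨s, ⟨hsX, a, haY⟩, b, rfl⟩
          obtain ⟨u'', hu'', h1, -, h2⟩ := hYi (Function.update s x a) haY
            (Function.update s₀ x b) (hs₀Y b) rfl
          rw [listVal_map_var, listVal_map_var] at h1
          rw [hvalx, hvalx] at h2
          refine ⟨u'', hu'', ?_⟩
          intro v hv
          rcases hv with hv | hv
          · have hvy : v ∈ y := by simpa using hv
            have hne := hxy v hvy
            have he : u'' v = Function.update s x a v := TeamFormulaAux.map_eq_map_mem h1 v hvy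
            rw [Function.update_of_ne hne] at he
            rw [Function.update_of_ne hne]
            exact he.symm
          · have hvx : v = x := Set.mem_singleton_iff.mp hv
            subst hvx
            simp only [Function.update_self]
            have he : u'' v = b := by simpa using h2
            exact he.symm
      · refine sat_of_trel ψ {x}ᶜ hψV Z _ ?_ ?_ hZ
        · intro t ht
          have ht' : t ∈ Y ∪ Z := Or.inr ht
          rw [hYZ] at ht'
          obtain ⟨s, hs, a, rfl⟩ := ht'
          exact ⟨s, ⟨hs, a, ht⟩, fun v hv => Function.update_of_ne hv a s⟩
        · rintro s ⟨hsX, a, haZ⟩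
          exact ⟨Function.update s x a, haZ,
            fun v hv => (Function.update_of_ne hv a s).symm⟩
  · intro h
    simp only [Sat] at h ⊢
    obtain ⟨Y, Z, hYZ, hY, hZ⟩ := h
    refine ⟨{s' | ∃ s ∈ Y, ∃ a : M, s' = Function.update s x a},
            {s' | ∃ s ∈ Z, ∃ a : M, s' = Function.update s x a}, ?_, ⟨hY, ?_⟩, ?_⟩
    · ext u
      constructor
      · rintro (⟨s, hs, a, rfl⟩ | ⟨s, hs, a, rfl⟩)
        · exact ⟨s, by rw [← hYZ]; exact Or.inl hs, a, rfl⟩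
        · exact ⟨s, by rw [← hYZ]; exact Or.inr hs, a, rfl⟩
      · rintro ⟨s, hs, a, rfl⟩
        rw [← hYZ] at hs
        rcases hs with hs | hs
        · exact Or.inl ⟨s, hs, a, rfl⟩
        · exact Or.inr ⟨s, hs, a, rfl⟩
    · rintro t ⟨s, hs, a, rfl⟩ t' ⟨s', hs', a', rfl⟩ -
      refine ⟨Function.update s x a', ⟨s, hs, a', rfl⟩, ?_, rfl, ?_⟩
      · rw [listVal_map_var, listVal_map_var]
        refine List.map_congr_left fun v hv => ?_
        have hne := hxy v hv
        rw [Function.update_of_ne hne, Function.update_of_ne hne]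
      · rw [hvalx, hvalx]
        simp
    · refine sat_of_trel ψ {x}ᶜ hψV Z _ ?_ ?_ hZ
      · intro s hs
        exact ⟨Function.update s x (s x), ⟨s, hs, s x, rfl⟩,
          fun v hv => (Function.update_of_ne hv (s x) s).symm⟩
      · rintro u ⟨s, hs, a, rfl⟩
        exact ⟨s, hs, fun v hv => Function.update_of_ne hv a s⟩
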